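/- Let α > 0, 0 < a < b, and t ≥ b. Then ∫_a^t ((t-s)/s)·(log(s/a))^α ds = (α+1)^{-1}·∫_a^t (log(s/a))^{α+1} ds ≥ (α+1)^{-1}·(1 - a/b)·t·(log(t/b))^{α+1}. -/

import Mathlib

open intervalIntegral Set

theorem stmt15 (α a b t : ℝ) (hα : 0 < α) (ha : 0 < a) (hab : a < b) (ht : b ≤ t) :
    (∫ s in a..t, ((t - s) / s) * Real.log (s / a) ^ α)
        = (α + 1)⁻¹ * ∫ s in a..t, Real.log (s / a) ^ (α + 1) ∧
    (α + 1)⁻¹ * (∫ s in a..t, Real.log (s / a) ^ (α + 1))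
        ≥ (α + 1)⁻¹ * (1 - a / b) * t * Real.log (t / b) ^ (α + 1) := by
  have hb : 0 < b := ha.trans hab
  have htpos : 0 < t := hb.trans_le ht
  have hat : a < t := hab.trans_le ht
  have h1 : (0:ℝ) < α + 1 := by linarith
  -- continuity of the log function
  have hclog : ContinuousOn (fun s : ℝ => Real.log (s / a)) (Set.Ici a) := by
    apply Real.continuousOn_log.comp (by fun_prop)
    intro s hs
    have : (0:ℝ) < s / a := div_pos (ha.trans_le hs) ha
    simpa using this.ne'
  have hcG : ∀ β : ℝ, 0 ≤ β →
      ContinuousOn (fun s : ℝ => Real.log (s / a) ^ β) (Set.Ici a) := fun β hβ =>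
    (Real.continuous_rpow_const hβ).comp_continuousOn hclog
  -- derivative computation
  have hderiv : ∀ s ∈ Set.uIcc a t,
      HasDerivAt (fun s : ℝ => (t - s) * Real.log (s / a) ^ (α + 1))
        (-(Real.log (s / a) ^ (α + 1))
          + (t - s) * ((α + 1) * Real.log (s / a) ^ α * s⁻¹)) s := by
    intro s hs
    rw [Set.uIcc_of_le hat.le] at hs
    have hspos : 0 < s := ha.trans_le hs.1
    have hlog : HasDerivAt (fun s : ℝ => Real.log (s / a)) s⁻¹ s := by
      have h1 : HasDerivAt (fun s : ℝ => Real.log s - Real.log a) s⁻¹ s :=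
        (Real.hasDerivAt_log hspos.ne').sub_const _
      refine h1.congr_of_eventuallyEq ?_
      filter_upwards [eventually_gt_nhds hspos] with x hx
      rw [Real.log_div hx.ne' ha.ne']
    have hpow : HasDerivAt (fun x : ℝ => x ^ (α + 1))
        ((α + 1) * Real.log (s / a) ^ α) (Real.log (s / a)) := by
      have := Real.hasDerivAt_rpow_const (x := Real.log (s / a)) (p := α + 1)
        (Or.inr (by linarith))
      simpa using this
    have hcomp := hpow.comp s hlog
    have hts : HasDerivAt (fun s : ℝ => t - s) (-1) s := by
      simpa using (hasDerivAt_id' s).const_sub t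
    have := hts.mul hcomp
    refine this.congr_deriv ?_
    simp only [Function.comp_apply]
    ring
  -- integrability of pieces
  have hint1 : IntervalIntegrable (fun s : ℝ => Real.log (s / a) ^ (α + 1))
      MeasureTheory.volume a t :=
    ((hcG _ h1.le).mono (by rw [Set.uIcc_of_le hat.le]; exact Set.Icc_subset_Ici_self)).intervalIntegrable
  have hint2 : IntervalIntegrable
      (fun s : ℝ => (t - s) * ((α + 1) * Real.log (s / a) ^ α * s⁻¹))
      MeasureTheory.volume a t := by
    apply ContinuousOn.intervalIntegrable
    rw [Set.uIcc_of_le hat.le]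
    apply ContinuousOn.mul (by fun_prop)
    apply ContinuousOn.mul
    · exact ContinuousOn.mul (by fun_prop)
        ((hcG _ hα.le).mono Set.Icc_subset_Ici_self)
    · exact ContinuousOn.inv₀ (by fun_prop)
        (fun s hs => (ha.trans_le hs.1).ne')
  have hintD : IntervalIntegrable
      (fun s : ℝ => -(Real.log (s / a) ^ (α + 1))
        + (t - s) * ((α + 1) * Real.log (s / a) ^ α * s⁻¹))
      MeasureTheory.volume a t := hint1.neg.add hint2
  have hFTC := intervalIntegral.integral_eq_sub_of_hasDerivAt hderiv hintD
  have hend : ((t - t) * Real.log (t / a) ^ (α + 1))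
      - ((t - a) * Real.log (a / a) ^ (α + 1)) = 0 := by
    rw [div_self ha.ne', Real.log_one, Real.zero_rpow h1.ne']
    ring
  rw [hend] at hFTC
  have hsum : (∫ s in a..t, (-(Real.log (s / a) ^ (α + 1))
        + (t - s) * ((α + 1) * Real.log (s / a) ^ α * s⁻¹)))
      = (∫ s in a..t, -(Real.log (s / a) ^ (α + 1)))
        + ∫ s in a..t, (t - s) * ((α + 1) * Real.log (s / a) ^ α * s⁻¹) :=
    intervalIntegral.integral_add hint1.neg hint2
  have hneg : (∫ s in a..t, -(Real.log (s / a) ^ (α + 1)))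
      = -∫ s in a..t, Real.log (s / a) ^ (α + 1) := intervalIntegral.integral_neg
  have key : (∫ s in a..t, (t - s) * ((α + 1) * Real.log (s / a) ^ α * s⁻¹))
      = ∫ s in a..t, Real.log (s / a) ^ (α + 1) := by linarith
  have part1 : (∫ s in a..t, ((t - s) / s) * Real.log (s / a) ^ α)
      = (α + 1)⁻¹ * ∫ s in a..t, Real.log (s / a) ^ (α + 1) := by
    rw [← key, ← intervalIntegral.integral_const_mul]
    congr 1; funext s
    linear_combination (-(t - s) * s⁻¹ * Real.log (s / a) ^ α) * inv_mul_cancel₀ h1.ne'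
  refine ⟨part1, ?_⟩
  -- Part 2: lower bound
  have hc : a ≤ a * t / b := by
    rw [le_div_iff₀ hb]
    nlinarith
  have hct : a * t / b ≤ t := by
    rw [div_le_iff₀ hb]
    nlinarith
  have hintL : IntervalIntegrable (fun s : ℝ => Real.log (s / a) ^ (α + 1))
      MeasureTheory.volume a (a * t / b) :=
    ((hcG _ h1.le).mono (by rw [Set.uIcc_of_le hc]; exact Set.Icc_subset_Ici_self)).intervalIntegrable
  have hintR : IntervalIntegrable (fun s : ℝ => Real.log (s / a) ^ (α + 1))
      MeasureTheory.volume (a * t / b) t :=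
    ((hcG _ h1.le).mono (by rw [Set.uIcc_of_le hct]; exact fun s hs => hc.trans hs.1)).intervalIntegrable
  have hsplit : (∫ s in a..t, Real.log (s / a) ^ (α + 1))
      = (∫ s in a..(a * t / b), Real.log (s / a) ^ (α + 1))
        + ∫ s in (a * t / b)..t, Real.log (s / a) ^ (α + 1) :=
    (intervalIntegral.integral_add_adjacent_intervals hintL hintR).symm
  have hL : 0 ≤ ∫ s in a..(a * t / b), Real.log (s / a) ^ (α + 1) := by
    apply intervalIntegral.integral_nonneg hc
    intro s hs
    exact Real.rpow_nonneg (Real.log_nonneg ((one_le_div ha).mpr hs.1)) _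
  have hR : (t - a * t / b) * Real.log (t / b) ^ (α + 1)
      ≤ ∫ s in (a * t / b)..t, Real.log (s / a) ^ (α + 1) := by
    have := intervalIntegral.integral_mono_on hct
      (_root_.intervalIntegrable_const (c := Real.log (t / b) ^ (α + 1))) hintR
      (fun s hs => by
        have hsa : t / b ≤ s / a := by
          rw [div_le_div_iff₀ hb ha]
          nlinarith [hs.1, (div_le_iff₀ hb).mp (le_refl (a * t / b))]
        exact Real.rpow_le_rpow (Real.log_nonneg ((one_le_div hb).mpr ht))
          (Real.log_le_log (div_pos htpos hb) hsa) h1.le)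
    simpa [smul_eq_mul, mul_comm] using this
  have hbound : (1 - a / b) * t * Real.log (t / b) ^ (α + 1)
      ≤ ∫ s in a..t, Real.log (s / a) ^ (α + 1) := by
    rw [hsplit]
    have : (1 - a / b) * t = t - a * t / b := by ring
    rw [this]
    linarith
  have hinv : (0:ℝ) ≤ (α + 1)⁻¹ := by positivity
  calc (α + 1)⁻¹ * (1 - a / b) * t * Real.log (t / b) ^ (α + 1)
      = (α + 1)⁻¹ * ((1 - a / b) * t * Real.log (t / b) ^ (α + 1)) := by ring
    _ ≤ (α + 1)⁻¹ * ∫ s in a..t, Real.log (s / a) ^ (α + 1) :=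
        mul_le_mul_of_nonneg_left hbound hinv
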